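/- arXiv:2102.02876 — 2 statements merged into one kernel-verified Lean document; each statement's English description precedes it below -/
import Mathlib

section
/- Let ζ : G → (0,∞) be twice continuously differentiable on an open set G ⊆ ℝ², and let G' := {z ∈ G : ∂_x∂_y log ζ(z) ≠ 0}. If O ⊆ G' is symmetric (invariant under the transposition τ(u,v) = (v,u)), open and convex, then the restriction of ∂_x∂_y log ζ to O is separable and symmetric if and only if the restriction of ζ to O is pseudo-Gaussian. -/
open MeasureTheory Set

/-- `ζ` is separable on `G`: a product of a function of `x` and a function of `y`. -/
def SeparableOn (ζ : ℝ × ℝ → ℝ) (G : Set (ℝ × ℝ)) : Prop :=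
  ∃ f g : ℝ → ℝ, ∀ p ∈ G, ζ p = f p.1 * g p.2

/-- `ζ` is pseudo-Gaussian on `G`:
`ζ(x,y) = ζ₁(x)·ζ₂(y)·exp(±ζ₃(x)ζ₃(y))` on `G`. -/
def PseudoGaussianOn (ζ : ℝ × ℝ → ℝ) (G : Set (ℝ × ℝ)) : Prop :=
  ∃ (f g h : ℝ → ℝ) (ε : ℝ), (ε = 1 ∨ ε = -1) ∧
    ∀ p ∈ G, ζ p = f p.1 * g p.2 * Real.exp (ε * (h p.1 * h p.2))

/-- The transposition `τ(u,v) = (v,u)`. -/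
def transposeR2 (p : ℝ × ℝ) : ℝ × ℝ := (p.2, p.1)

/-- A set `A ⊆ ℝ²` is symmetric if it is invariant under the transposition. -/
def SymmetricSet (A : Set (ℝ × ℝ)) : Prop := transposeR2 '' A = A

/-- A function is symmetric on `A` if it is invariant under the transposition there. -/
def SymmetricOn (φ : ℝ × ℝ → ℝ) (A : Set (ℝ × ℝ)) : Prop :=
  ∀ p ∈ A, φ (transposeR2 p) = φ p

/-- The mixed logarithmic derivative `∂ₓ∂_y log ζ`. -/
noncomputable def mld (ζ : ℝ × ℝ → ℝ) (p : ℝ × ℝ) : ℝ :=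
  deriv (fun x => deriv (fun y => Real.log (ζ (x, y))) p.2) p.1

open Filter Topology


noncomputable def DyF (Λ : ℝ × ℝ → ℝ) : ℝ × ℝ → ℝ := fun q => fderiv ℝ Λ q ((0:ℝ), (1:ℝ))
noncomputable def mld2 (Λ : ℝ × ℝ → ℝ) : ℝ × ℝ → ℝ := fun q => fderiv ℝ (DyF Λ) q ((1:ℝ), (0:ℝ))

lemma sliceY {F : ℝ × ℝ → ℝ} {p : ℝ × ℝ} (hd : DifferentiableAt ℝ F p) :
    HasDerivAt (fun y => F (p.1, y)) (fderiv ℝ F p ((0:ℝ), (1:ℝ))) p.2 := by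
  have hγ : HasDerivAt (fun y : ℝ => ((p.1, y) : ℝ × ℝ)) ((0:ℝ), (1:ℝ)) p.2 :=
    (hasDerivAt_const _ _).prodMk (hasDerivAt_id _)
  have := (hd.hasFDerivAt).comp_hasDerivAt p.2 (by simpa using hγ)
  exact this

lemma sliceX {F : ℝ × ℝ → ℝ} {p : ℝ × ℝ} (hd : DifferentiableAt ℝ F p) :
    HasDerivAt (fun x => F (x, p.2)) (fderiv ℝ F p ((1:ℝ), (0:ℝ))) p.1 := by
  have hγ : HasDerivAt (fun x : ℝ => ((x, p.2) : ℝ × ℝ)) ((1:ℝ), (0:ℝ)) p.1 :=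
    (hasDerivAt_id _).prodMk (hasDerivAt_const _ _)
  have := (hd.hasFDerivAt).comp_hasDerivAt p.1 (by simpa using hγ)
  exact this

section
variable {G : Set (ℝ × ℝ)} {Λ : ℝ × ℝ → ℝ}

lemma DyF_contDiffOn (hG : IsOpen G) (hΛ : ContDiffOn ℝ 2 Λ G) :
    ContDiffOn ℝ 1 (DyF Λ) G := by
  have h1 : ContDiffOn ℝ 1 (fderiv ℝ Λ) G := hΛ.fderiv_of_isOpen hG (by norm_num)
  exact (ContinuousLinearMap.apply ℝ ℝ ((0:ℝ), (1:ℝ))).contDiff.comp_contDiffOn h1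

lemma hasDerivAt_DyF (hG : IsOpen G) (hΛ : ContDiffOn ℝ 2 Λ G) {q : ℝ × ℝ} (hq : q ∈ G) :
    HasDerivAt (fun y => Λ (q.1, y)) (DyF Λ q) q.2 :=
  sliceY (((hΛ.contDiffAt (hG.mem_nhds hq)).differentiableAt (by norm_num)))

lemma hasDerivAt_mld2 (hG : IsOpen G) (hΛ : ContDiffOn ℝ 2 Λ G) {q : ℝ × ℝ} (hq : q ∈ G) :
    HasDerivAt (fun x => DyF Λ (x, q.2)) (mld2 Λ q) q.1 :=
  sliceX ((((DyF_contDiffOn hG hΛ).contDiffAt (hG.mem_nhds hq)).differentiableAt one_ne_zero))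

lemma deriv_deriv_eq_mld2 (hG : IsOpen G) (hΛ : ContDiffOn ℝ 2 Λ G) {q : ℝ × ℝ} (hq : q ∈ G) :
    deriv (fun x => deriv (fun y => Λ (x, y)) q.2) q.1 = mld2 Λ q := by
  have hev : (fun x => deriv (fun y => Λ (x, y)) q.2) =ᶠ[𝓝 q.1] (fun x => DyF Λ (x, q.2)) := by
    have hopen : IsOpen {x : ℝ | (x, q.2) ∈ G} :=
      hG.preimage (by continuity : Continuous fun x : ℝ => ((x, q.2) : ℝ × ℝ))
    filter_upwards [hopen.mem_nhds (by simpa using hq)] with x hx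
    exact (hasDerivAt_DyF hG hΛ (q := (x, q.2)) hx).deriv
  rw [hev.deriv_eq]
  exact (hasDerivAt_mld2 hG hΛ hq).deriv

lemma continuousOn_mld2 (hG : IsOpen G) (hΛ : ContDiffOn ℝ 2 Λ G) :
    ContinuousOn (mld2 Λ) G := by
  have h1 : ContDiffOn ℝ 0 (fderiv ℝ (DyF Λ)) G :=
    (DyF_contDiffOn hG hΛ).fderiv_of_isOpen hG (by norm_num)
  have h2 : ContinuousOn (fderiv ℝ (DyF Λ)) G := h1.continuousOn
  exact (ContinuousLinearMap.apply ℝ ℝ ((1:ℝ), (0:ℝ))).continuous.comp_continuousOn h2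
end


lemma mld_eq_of_pg
    {G : Set (ℝ × ℝ)} (hG : IsOpen G)
    {ζ : ℝ × ℝ → ℝ} (hζpos : ∀ p ∈ G, 0 < ζ p)
    (hζC2 : ContDiffOn ℝ 2 ζ G)
    {O : Set (ℝ × ℝ)} (hOsub : O ⊆ {z ∈ G | mld ζ z ≠ 0}) (hOopen : IsOpen O)
    (f g h : ℝ → ℝ) (ε : ℝ)
    (heq : ∀ p ∈ O, ζ p = f p.1 * g p.2 * Real.exp (ε * (h p.1 * h p.2))) (hεne : ε ≠ 0) :
    ∀ p ∈ O, mld ζ p = ε * (deriv h p.1 * deriv h p.2) := by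
  have hGO : O ⊆ G := fun q hq => (hOsub hq).1
  set Λ : ℝ × ℝ → ℝ := fun q => Real.log (ζ q) with hΛdef
  have hΛ : ContDiffOn ℝ 2 Λ G := hζC2.log (fun q hq => (hζpos q hq).ne')
  -- nonvanishing of f, g on coordinates of O
  have hfg : ∀ q ∈ O, f q.1 ≠ 0 ∧ g q.2 ≠ 0 := by
    intro q hq
    have h1 : 0 < ζ q := hζpos q (hGO hq)
    rw [heq q hq] at h1
    have h2 : 0 < f q.1 * g q.2 := by
      have he : 0 < Real.exp (ε * (h q.1 * h q.2)) := Real.exp_pos _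
      nlinarith
    exact ⟨fun h0 => by simp [h0] at h2, fun h0 => by simp [h0] at h2⟩
  have Lrep : ∀ q ∈ O, Λ q = Real.log (f q.1) + Real.log (g q.2) + ε * (h q.1 * h q.2) := by
    intro q hq
    obtain ⟨hf0, hg0⟩ := hfg q hq
    simp only [hΛdef, heq q hq]
    rw [Real.log_mul (mul_ne_zero hf0 hg0) (Real.exp_ne_zero _), Real.log_mul hf0 hg0,
      Real.log_exp]
  intro p hp
  obtain ⟨a, b⟩ := p
  obtain ⟨r, hr, hball⟩ := Metric.isOpen_iff.mp hOopen _ hp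
  have hmem : ∀ {x y : ℝ}, x ∈ Metric.ball a r → y ∈ Metric.ball b r → (x, y) ∈ O := by
    intro x y hx hy
    apply hball
    rw [Metric.mem_ball] at hx hy ⊢
    rw [Prod.dist_eq]
    exact max_lt hx hy
  have hainball : a ∈ Metric.ball a r := Metric.mem_ball_self hr
  have hbinball : b ∈ Metric.ball b r := Metric.mem_ball_self hr
  have hmldne : mld ζ (a, b) ≠ 0 := (hOsub hp).2
  by_cases Cb : ∃ y1 ∈ Metric.ball b r, ∃ y2 ∈ Metric.ball b r, h y1 ≠ h y2
  · by_cases Ca : ∃ x1 ∈ Metric.ball a r, ∃ x2 ∈ Metric.ball a r, h x1 ≠ h x2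
    · -- main case: h is differentiable near a and near b
      obtain ⟨y1, hy1, y2, hy2, hΔy⟩ := Cb
      obtain ⟨x1, hx1, x2, hx2, hΔx⟩ := Ca
      have hΔy0 : h y1 - h y2 ≠ 0 := sub_ne_zero.mpr hΔy
      have hΔx0 : h x1 - h x2 ≠ 0 := sub_ne_zero.mpr hΔx
      have hdiffa : ∀ x ∈ Metric.ball a r, DifferentiableAt ℝ h x := by
        intro x hx
        have h1 : HasDerivAt (fun t => Λ (t, y1)) (fderiv ℝ Λ ((x, y1) : ℝ × ℝ) ((1:ℝ),(0:ℝ))) x :=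
          sliceX ((hΛ.contDiffAt (hG.mem_nhds (hGO (hmem hx hy1)))).differentiableAt (by norm_num))
        have h2 : HasDerivAt (fun t => Λ (t, y2)) (fderiv ℝ Λ ((x, y2) : ℝ × ℝ) ((1:ℝ),(0:ℝ))) x :=
          sliceX ((hΛ.contDiffAt (hG.mem_nhds (hGO (hmem hx hy2)))).differentiableAt (by norm_num))
        have hD : HasDerivAt
            (fun t => (Λ (t, y1) - Λ (t, y2) - (Real.log (g y1) - Real.log (g y2))) / (ε * (h y1 - h y2)))
            ((fderiv ℝ Λ ((x, y1) : ℝ × ℝ) ((1:ℝ),(0:ℝ)) - fderiv ℝ Λ ((x, y2) : ℝ × ℝ) ((1:ℝ),(0:ℝ))) / (ε * (h y1 - h y2))) x :=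
          ((h1.sub h2).sub_const _).div_const _
        have hev : h =ᶠ[𝓝 x]
            (fun t => (Λ (t, y1) - Λ (t, y2) - (Real.log (g y1) - Real.log (g y2))) / (ε * (h y1 - h y2))) := by
          filter_upwards [Metric.isOpen_ball.mem_nhds hx] with t ht
          have e1 := Lrep (t, y1) (hmem ht hy1)
          have e2 := Lrep (t, y2) (hmem ht hy2)
          simp only at e1 e2
          field_simp
          nlinarith [e1, e2]
        exact (hD.congr_of_eventuallyEq hev).differentiableAt
      have hdiffb : ∀ y ∈ Metric.ball b r, DifferentiableAt ℝ h y := by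
        intro y hy
        have h1 : HasDerivAt (fun t => Λ (x1, t)) (fderiv ℝ Λ ((x1, y) : ℝ × ℝ) ((0:ℝ),(1:ℝ))) y :=
          sliceY ((hΛ.contDiffAt (hG.mem_nhds (hGO (hmem hx1 hy)))).differentiableAt (by norm_num))
        have h2 : HasDerivAt (fun t => Λ (x2, t)) (fderiv ℝ Λ ((x2, y) : ℝ × ℝ) ((0:ℝ),(1:ℝ))) y :=
          sliceY ((hΛ.contDiffAt (hG.mem_nhds (hGO (hmem hx2 hy)))).differentiableAt (by norm_num))
        have hD : HasDerivAt
            (fun t => (Λ (x1, t) - Λ (x2, t) - (Real.log (f x1) - Real.log (f x2))) / (ε * (h x1 - h x2)))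
            ((fderiv ℝ Λ ((x1, y) : ℝ × ℝ) ((0:ℝ),(1:ℝ)) - fderiv ℝ Λ ((x2, y) : ℝ × ℝ) ((0:ℝ),(1:ℝ))) / (ε * (h x1 - h x2))) y :=
          ((h1.sub h2).sub_const _).div_const _
        have hev : h =ᶠ[𝓝 y]
            (fun t => (Λ (x1, t) - Λ (x2, t) - (Real.log (f x1) - Real.log (f x2))) / (ε * (h x1 - h x2))) := by
          filter_upwards [Metric.isOpen_ball.mem_nhds hy] with t ht
          have e1 := Lrep (x1, t) (hmem hx1 ht)
          have e2 := Lrep (x2, t) (hmem hx2 ht)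
          simp only at e1 e2
          field_simp
          nlinarith [e1, e2]
        exact (hD.congr_of_eventuallyEq hev).differentiableAt
      have ha : HasDerivAt h (deriv h a) a := (hdiffa a hainball).hasDerivAt
      have hb : HasDerivAt h (deriv h b) b := (hdiffb b hbinball).hasDerivAt
      -- differentiability of log ∘ g at b
      have hΛab : HasDerivAt (fun y => Λ (a, y)) (fderiv ℝ Λ ((a, b) : ℝ × ℝ) ((0:ℝ),(1:ℝ))) b :=
        sliceY ((hΛ.contDiffAt (hG.mem_nhds (hGO hp))).differentiableAt (by norm_num))
      have hβ : HasDerivAt (fun y => Real.log (g y))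
          (fderiv ℝ Λ ((a, b) : ℝ × ℝ) ((0:ℝ),(1:ℝ)) - ε * (h a * deriv h b)) b := by
        have h3 : HasDerivAt (fun y => ε * (h a * h y)) (ε * (h a * deriv h b)) b :=
          (hb.const_mul (h a)).const_mul ε
        have hrhs : HasDerivAt (fun y => Λ (a, y) - Real.log (f a) - ε * (h a * h y))
            (fderiv ℝ Λ ((a, b) : ℝ × ℝ) ((0:ℝ),(1:ℝ)) - ε * (h a * deriv h b)) b := by
          have := (hΛab.sub_const (Real.log (f a))).sub h3
          exact this
        apply hrhs.congr_of_eventuallyEq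
        filter_upwards [Metric.isOpen_ball.mem_nhds hbinball] with y hy
        have e1 := Lrep (a, y) (hmem hainball hy)
        simp only at e1
        linarith [e1]
      set βd : ℝ := fderiv ℝ Λ ((a, b) : ℝ × ℝ) ((0:ℝ),(1:ℝ)) - ε * (h a * deriv h b) with hβd
      have hInner : ∀ x ∈ Metric.ball a r,
          deriv (fun y => Real.log (ζ (x, y))) b = βd + ε * (h x * deriv h b) := by
        intro x hx
        have hrhs : HasDerivAt (fun y => Real.log (f x) + Real.log (g y) + ε * (h x * h y))
            (0 + βd + ε * (h x * deriv h b)) b :=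
          ((hasDerivAt_const b (Real.log (f x))).add hβ).add ((hb.const_mul (h x)).const_mul ε)
        have hfin : HasDerivAt (fun y => Real.log (ζ (x, y))) (0 + βd + ε * (h x * deriv h b)) b := by
          apply hrhs.congr_of_eventuallyEq
          filter_upwards [Metric.isOpen_ball.mem_nhds hbinball] with y hy
          exact Lrep (x, y) (hmem hx hy)
        rw [hfin.deriv]; ring
      have hOuter : HasDerivAt (fun x => deriv (fun y => Real.log (ζ (x, y))) b)
          (ε * (deriv h a * deriv h b)) a := by
        have hrhs : HasDerivAt (fun x => βd + ε * (h x * deriv h b))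
            (ε * (deriv h a * deriv h b)) a := by
          have := (((ha.mul_const (deriv h b)).const_mul ε).const_add βd)
          simpa using this
        apply hrhs.congr_of_eventuallyEq
        filter_upwards [Metric.isOpen_ball.mem_nhds hainball] with x hx
        exact hInner x hx
      show mld ζ (a, b) = ε * (deriv h a * deriv h b)
      simp only [mld]
      exact hOuter.deriv
    · -- h constant on ball a r : contradiction
      exfalso
      push_neg at Ca
      have hInner : ∀ x ∈ Metric.ball a r,
          deriv (fun y => Real.log (ζ (x, y))) b
            = deriv (fun y => Real.log (g y) + ε * (h a * h y)) b := by
        intro x hx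
        have hev : (fun y => Real.log (ζ (x, y))) =ᶠ[𝓝 b]
            (fun y => Real.log (f x) + (Real.log (g y) + ε * (h a * h y))) := by
          filter_upwards [Metric.isOpen_ball.mem_nhds hbinball] with y hy
          have e1 := Lrep (x, y) (hmem hx hy)
          simp only at e1
          rw [Ca x hx a hainball] at e1
          linarith [e1]
        rw [hev.deriv_eq, deriv_const_add]
      have : mld ζ (a, b) = 0 := by
        simp only [mld]
        have hev : (fun x => deriv (fun y => Real.log (ζ (x, y))) b) =ᶠ[𝓝 a]
            (fun _ => deriv (fun y => Real.log (g y) + ε * (h a * h y)) b) := by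
          filter_upwards [Metric.isOpen_ball.mem_nhds hainball] with x hx
          exact hInner x hx
        rw [hev.deriv_eq, deriv_const]
      exact hmldne this
  · -- h constant on ball b r : contradiction
    exfalso
    push_neg at Cb
    have hInner : ∀ x ∈ Metric.ball a r,
        deriv (fun y => Real.log (ζ (x, y))) b = deriv (fun y => Real.log (g y)) b := by
      intro x hx
      have hev : (fun y => Real.log (ζ (x, y))) =ᶠ[𝓝 b]
          (fun y => (Real.log (f x) + ε * (h x * h b)) + Real.log (g y)) := by
        filter_upwards [Metric.isOpen_ball.mem_nhds hbinball] with y hy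
        have e1 := Lrep (x, y) (hmem hx hy)
        simp only at e1
        rw [Cb y hy b hbinball] at e1
        linarith [e1]
      rw [hev.deriv_eq, deriv_const_add]
    have : mld ζ (a, b) = 0 := by
      simp only [mld]
      have hev : (fun x => deriv (fun y => Real.log (ζ (x, y))) b) =ᶠ[𝓝 a]
          (fun _ => deriv (fun y => Real.log (g y)) b) := by
        filter_upwards [Metric.isOpen_ball.mem_nhds hainball] with x hx
        exact hInner x hx
      rw [hev.deriv_eq, deriv_const]
    exact hmldne this

lemma hasDerivAt_primitive {X : Set ℝ} (hX : IsOpen X) (hconv : Convex ℝ X)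
    {F : ℝ → ℝ} (hF : ContinuousOn F X) {x0 : ℝ} (hx0 : x0 ∈ X) :
    ∀ x ∈ X, HasDerivAt (fun x => ∫ t in x0..x, X.indicator F t) (F x) x := by
  intro x hx
  set Fe : ℝ → ℝ := X.indicator F with hFe
  have hEq : Set.EqOn Fe F X := fun t ht => by simp [hFe, Set.indicator_of_mem ht]
  have hFecont : ContinuousOn Fe X := hF.congr hEq
  have huIcc : Set.uIcc x0 x ⊆ X := hconv.ordConnected.uIcc_subset hx0 hx
  have hii : IntervalIntegrable Fe MeasureTheory.volume x0 x :=
    (hFecont.mono huIcc).intervalIntegrable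
  have hsm : StronglyMeasurableAtFilter Fe (𝓝 x) MeasureTheory.volume :=
    hFecont.stronglyMeasurableAtFilter hX x hx
  have hca : ContinuousAt Fe x := hFecont.continuousAt (hX.mem_nhds hx)
  have := intervalIntegral.integral_hasDerivAt_right hii hsm hca
  simpa [hFe, hx] using this

lemma const_of_hasDerivAt_zero {s : Set ℝ} (hso : IsOpen s) (hsc : Convex ℝ s)
    {φ : ℝ → ℝ} (hd : ∀ t ∈ s, HasDerivAt φ 0 t) {a b : ℝ} (ha : a ∈ s) (hb : b ∈ s) :
    φ a = φ b := by
  apply hsc.is_const_of_fderivWithin_eq_zero (𝕜 := ℝ)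
    (fun t ht => (hd t ht).differentiableAt.differentiableWithinAt) ?_ ha hb
  intro t ht
  rw [fderivWithin_of_isOpen hso ht]
  have h4 : HasFDerivAt φ (0 : ℝ →L[ℝ] ℝ) t := by
    have h5 := (hd t ht).hasFDerivAt
    simp at h5
    exact h5
  exact h4.fderiv

lemma pg_of_sep
    {G : Set (ℝ × ℝ)} (hG : IsOpen G)
    {ζ : ℝ × ℝ → ℝ} (hζpos : ∀ p ∈ G, 0 < ζ p)
    (hζC2 : ContDiffOn ℝ 2 ζ G)
    {O : Set (ℝ × ℝ)} (hOsub : O ⊆ {z ∈ G | mld ζ z ≠ 0})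
    (hτO : ∀ p ∈ O, ((p.2, p.1) : ℝ × ℝ) ∈ O)
    (hOopen : IsOpen O) (hOconv : Convex ℝ O)
    {p0 : ℝ × ℝ} (hp0 : p0 ∈ O)
    (f g : ℝ → ℝ) (hsep : ∀ p ∈ O, mld ζ p = f p.1 * g p.2)
    (hsym : ∀ p ∈ O, mld ζ ((p.2, p.1) : ℝ × ℝ) = mld ζ p) :
    ∃ (A B H : ℝ → ℝ) (ε : ℝ), (ε = 1 ∨ ε = -1) ∧
      ∀ p ∈ O, ζ p = A p.1 * B p.2 * Real.exp (ε * (H p.1 * H p.2)) := by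
  have hGO : O ⊆ G := fun q hq => (hOsub hq).1
  have hΛ : ContDiffOn ℝ 2 (fun q => Real.log (ζ q)) G :=
    hζC2.log (fun q hq => (hζpos q hq).ne')
  have hmld : ∀ q ∈ G, mld ζ q = mld2 (fun q => Real.log (ζ q)) q := by
    intro q hq
    exact deriv_deriv_eq_mld2 hG hΛ hq
  have hmldCont : ContinuousOn (mld ζ) G :=
    (continuousOn_mld2 hG hΛ).congr (fun q hq => hmld q hq)
  have hDyX : ∀ q ∈ G, HasDerivAt (fun t => DyF (fun q => Real.log (ζ q)) (t, q.2))
      (mld ζ q) q.1 := by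
    intro q hq
    rw [hmld q hq]
    exact hasDerivAt_mld2 hG hΛ hq
  have hΛY : ∀ q ∈ G, HasDerivAt (fun y => Real.log (ζ (q.1, y)))
      (DyF (fun q => Real.log (ζ q)) q) q.2 := fun q hq => hasDerivAt_DyF hG hΛ hq
  have hk : ∀ p ∈ O, mld ζ p ≠ 0 := fun p hp => (hOsub hp).2
  -- the projection X
  set X : Set ℝ := Prod.fst '' O with hXdef
  have hXopen : IsOpen X := isOpenMap_fst O hOopen
  have hmemX : ∀ p ∈ O, p.1 ∈ X := fun p hp => ⟨p, hp, rfl⟩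
  have hmemX2 : ∀ p ∈ O, p.2 ∈ X := fun p hp => ⟨(p.2, p.1), hτO p hp, rfl⟩
  have hXex : ∀ x ∈ X, ∃ y, (x, y) ∈ O := by
    rintro x ⟨q, hq, rfl⟩
    exact ⟨q.2, by rwa [Prod.mk.eta]⟩
  have hXexy : ∀ y ∈ X, ∃ x, (x, y) ∈ O := by
    intro y hy
    obtain ⟨v, hv⟩ := hXex y hy
    exact ⟨v, hτO _ hv⟩
  have hXconv : Convex ℝ X := hOconv.is_linear_image (IsLinearMap.mk (fun _ _ => rfl) (fun _ _ => rfl))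
  have hfgne : ∀ p ∈ O, f p.1 ≠ 0 ∧ g p.2 ≠ 0 := by
    intro p hp
    have := hk p hp
    rw [hsep p hp] at this
    exact ⟨left_ne_zero_of_mul this, right_ne_zero_of_mul this⟩
  have hfX : ∀ x ∈ X, f x ≠ 0 := by
    intro x hx; obtain ⟨y, hy⟩ := hXex x hx; exact (hfgne _ hy).1
  have hgX : ∀ x ∈ X, g x ≠ 0 := by
    intro x hx; obtain ⟨y, hy⟩ := hXexy x hx; exact (hfgne _ hy).2
  -- c is locally constant on X, hence constant
  set c : ℝ → ℝ := fun u => g u / f u with hcdef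
  have hcO : ∀ {u v : ℝ}, (u, v) ∈ O → c u = c v := by
    intro u v huv
    have h1 : mld ζ ((v, u) : ℝ × ℝ) = mld ζ (u, v) := hsym (u, v) huv
    rw [hsep _ (hτO _ huv), hsep _ huv] at h1
    simp only at h1
    have hfu : f u ≠ 0 := hfX u (hmemX _ huv)
    have hfv : f v ≠ 0 := hfX v (hmemX2 _ huv)
    simp only [hcdef]
    field_simp
    nlinarith [h1]
  have hlc : ∀ x ∈ X, ∃ s : Set ℝ, IsOpen s ∧ x ∈ s ∧ s ⊆ X ∧ ∀ x' ∈ s, c x' = c x := by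
    intro x hx
    obtain ⟨y, hy⟩ := hXex x hx
    obtain ⟨r, hr, hball⟩ := Metric.isOpen_iff.mp hOopen _ hy
    refine ⟨Metric.ball x r, Metric.isOpen_ball, Metric.mem_ball_self hr, ?_, ?_⟩
    · intro x' hx'
      refine hmemX (x', y) (hball ?_)
      rw [Metric.mem_ball] at hx' ⊢
      rw [Prod.dist_eq]
      simp only [dist_self]
      exact max_lt (by simpa using hx') hr
    · intro x' hx'
      have hm : (x', y) ∈ O := by
        apply hball
        rw [Metric.mem_ball] at hx' ⊢
        rw [Prod.dist_eq]
        simp only [dist_self]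
        exact max_lt (by simpa using hx') hr
      rw [hcO hm, hcO hy]
  set c0 : ℝ := c p0.1 with hc0def
  have hcc : ∀ x ∈ X, c x = c0 := by
    by_contra hcon
    push_neg at hcon
    obtain ⟨z, hz, hzne⟩ := hcon
    set U : Set ℝ := {x | x ∈ X ∧ c x = c0} with hUdef
    set V : Set ℝ := {x | x ∈ X ∧ c x ≠ c0} with hVdef
    have hUopen : IsOpen U := by
      rw [isOpen_iff_mem_nhds]
      rintro x ⟨hx, hcx⟩
      obtain ⟨s, hso, hxs, hsX, hsc⟩ := hlc x hx
      exact Filter.mem_of_superset (hso.mem_nhds hxs)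
        (fun x' hx' => ⟨hsX hx', (hsc x' hx').trans hcx⟩)
    have hVopen : IsOpen V := by
      rw [isOpen_iff_mem_nhds]
      rintro x ⟨hx, hcx⟩
      obtain ⟨s, hso, hxs, hsX, hsc⟩ := hlc x hx
      exact Filter.mem_of_superset (hso.mem_nhds hxs)
        (fun x' hx' => ⟨hsX hx', by rw [hsc x' hx']; exact hcx⟩)
    have hXpre : IsPreconnected X := (hOconv.isPreconnected).image _ continuous_fst.continuousOn
    have h1 : X ⊆ U ∪ V := by
      intro x hx
      by_cases hc : c x = c0
      · exact Or.inl ⟨hx, hc⟩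
      · exact Or.inr ⟨hx, hc⟩
    have h2 : (X ∩ U).Nonempty := ⟨p0.1, hmemX p0 hp0, hmemX p0 hp0, rfl⟩
    have h3 : (X ∩ V).Nonempty := ⟨z, hz, hz, hzne⟩
    obtain ⟨w, _, ⟨_, hw1⟩, ⟨_, hw2⟩⟩ := hXpre U V hUopen hVopen h1 h2 h3
    exact hw2 hw1
  have hc00 : c0 ≠ 0 := by
    rw [hc0def, hcdef]
    exact div_ne_zero (hgX _ (hmemX p0 hp0)) (hfX _ (hmemX p0 hp0))
  have hgc : ∀ x ∈ X, g x = c0 * f x := by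
    intro x hx
    have := hcc x hx
    rw [hcdef] at this
    field_simp [hfX x hx] at this
    linarith [this]
  set ε : ℝ := if 0 < c0 then (1:ℝ) else (-1:ℝ) with hεdef
  have hεor : ε = 1 ∨ ε = -1 := by
    rw [hεdef]; split_ifs <;> simp
  have hεabs : ε * |c0| = c0 := by
    rw [hεdef]
    split_ifs with hpos
    · rw [abs_of_pos hpos]; ring
    · rw [abs_of_neg (lt_of_le_of_ne (not_lt.mp hpos) hc00)]; ring
  set F : ℝ → ℝ := fun u => Real.sqrt |c0| * f u with hFdef
  have hkF : ∀ p ∈ O, mld ζ p = ε * (F p.1 * F p.2) := by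
    intro p hp
    rw [hsep p hp, hgc p.2 (hmemX2 p hp), hFdef]
    simp only
    have hs : Real.sqrt |c0| * Real.sqrt |c0| = |c0| := Real.mul_self_sqrt (abs_nonneg _)
    rw [show ε * (Real.sqrt |c0| * f p.1 * (Real.sqrt |c0| * f p.2))
        = ε * (Real.sqrt |c0| * Real.sqrt |c0|) * (f p.1 * f p.2) from by ring, hs,
      show ε * |c0| * (f p.1 * f p.2) = (ε * |c0|) * (f p.1 * f p.2) from by ring, hεabs]
    ring
  -- F is continuous on X
  have hFcont : ContinuousOn F X := by
    intro x hx
    apply ContinuousAt.continuousWithinAt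
    obtain ⟨y, hy⟩ := hXex x hx
    obtain ⟨r, hr, hball⟩ := Metric.isOpen_iff.mp hOopen _ hy
    have hmem : ∀ x' ∈ Metric.ball x r, (x', y) ∈ O := by
      intro x' hx'
      apply hball
      rw [Metric.mem_ball] at hx' ⊢
      rw [Prod.dist_eq]
      simp only [dist_self]
      exact max_lt (by simpa using hx') hr
    have hca : ContinuousAt (fun x' => Real.sqrt |c0| * (mld ζ (x', y) / g y)) x := by
      have h1 : ContinuousAt (fun x' => mld ζ ((x' , y) : ℝ × ℝ)) x := by
        have h2 : ContinuousAt (mld ζ) ((x, y) : ℝ × ℝ) :=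
          hmldCont.continuousAt (hG.mem_nhds (hGO hy))
        have h3 : ContinuousAt (fun x' : ℝ => ((x', y) : ℝ × ℝ)) x :=
          (continuous_id.prodMk continuous_const).continuousAt
        exact ContinuousAt.comp (x := x) h2 h3
      exact (continuousAt_const.mul (h1.div_const _))
    apply hca.congr
    filter_upwards [Metric.isOpen_ball.mem_nhds (Metric.mem_ball_self hr)] with x' hx'
    have hm := hmem x' hx'
    have := hsep _ hm
    simp only at this
    rw [hFdef]
    simp only
    rw [this]
    field_simp [hgX y (hmemX2 _ hm)]
  -- the primitive H of F
  set H : ℝ → ℝ := fun x => ∫ t in p0.1..x, X.indicator F t with hHdef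
  have hH : ∀ x ∈ X, HasDerivAt H (F x) x :=
    hasDerivAt_primitive hXopen hXconv hFcont (hmemX p0 hp0)
  -- slices
  have hSyopen : ∀ y : ℝ, IsOpen {t : ℝ | ((t, y) : ℝ × ℝ) ∈ O} := fun y =>
    hOopen.preimage (continuous_id.prodMk continuous_const)
  have hSxopen : ∀ x : ℝ, IsOpen {t : ℝ | ((x, t) : ℝ × ℝ) ∈ O} := fun x =>
    hOopen.preimage (continuous_const.prodMk continuous_id)
  have hSyconv : ∀ y : ℝ, Convex ℝ {t : ℝ | ((t, y) : ℝ × ℝ) ∈ O} := by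
    intro y t1 h1 t2 h2 s1 s2 hs1 hs2 hsum
    have h3 := hOconv h1 h2 hs1 hs2 hsum
    have hx4 : s1 * y + s2 * y = y := by rw [← add_mul, hsum, one_mul]
    show ((s1 • t1 + s2 • t2, y) : ℝ × ℝ) ∈ O
    have h4 : s1 • ((t1, y) : ℝ × ℝ) + s2 • ((t2, y) : ℝ × ℝ)
        = ((s1 • t1 + s2 • t2, y) : ℝ × ℝ) := by
      simp only [Prod.smul_mk, Prod.mk_add_mk, smul_eq_mul, hx4]
    rwa [h4] at h3
  have hSxconv : ∀ x : ℝ, Convex ℝ {t : ℝ | ((x, t) : ℝ × ℝ) ∈ O} := by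
    intro x t1 h1 t2 h2 s1 s2 hs1 hs2 hsum
    have h3 := hOconv h1 h2 hs1 hs2 hsum
    have hx4 : s1 * x + s2 * x = x := by rw [← add_mul, hsum, one_mul]
    show ((x, s1 • t1 + s2 • t2) : ℝ × ℝ) ∈ O
    have h4 : s1 • ((x, t1) : ℝ × ℝ) + s2 • ((x, t2) : ℝ × ℝ)
        = ((x, s1 • t1 + s2 • t2) : ℝ × ℝ) := by
      simp only [Prod.smul_mk, Prod.mk_add_mk, smul_eq_mul, hx4]
    rwa [h4] at h3
  -- Step 1 : the y-partial of log ζ - ε H H is independent of x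
  have hP : ∀ (y x x' : ℝ), (x, y) ∈ O → (x', y) ∈ O →
      DyF (fun q => Real.log (ζ q)) (x, y) - ε * (H x * F y)
        = DyF (fun q => Real.log (ζ q)) (x', y) - ε * (H x' * F y) := by
    intro y x x' hxy hx'y
    apply const_of_hasDerivAt_zero (hSyopen y) (hSyconv y)
      (φ := fun t => DyF (fun q => Real.log (ζ q)) (t, y) - ε * (H t * F y)) ?_ hxy hx'y
    intro t ht
    have htG : ((t, y) : ℝ × ℝ) ∈ G := hGO ht
    have h1 : HasDerivAt (fun t => DyF (fun q => Real.log (ζ q)) (t, y)) (mld ζ (t, y)) t :=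
      hDyX (t, y) htG
    have h2 : HasDerivAt (fun t => ε * (H t * F y)) (ε * (F t * F y)) t :=
      ((hH t (hmemX _ ht)).mul_const (F y)).const_mul ε
    have h3 := h1.sub h2
    rw [hkF (t, y) ht, sub_self] at h3
    exact h3
  have hVex : ∀ p : ℝ × ℝ, p ∈ O → ∃ x, ((x, p.2) : ℝ × ℝ) ∈ O :=
    fun p hp => ⟨p.1, by rwa [Prod.mk.eta]⟩
  classical
  set V : ℝ → ℝ := fun y => if hy : ∃ x, ((x, y) : ℝ × ℝ) ∈ O
      then DyF (fun q => Real.log (ζ q)) (hy.choose, y) - ε * (H hy.choose * F y) else 0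
    with hVdef
  have hVeq : ∀ p ∈ O, DyF (fun q => Real.log (ζ q)) p - ε * (H p.1 * F p.2) = V p.2 := by
    intro p hp
    have hy : ∃ x, ((x, p.2) : ℝ × ℝ) ∈ O := hVex p hp
    rw [hVdef]
    simp only
    rw [dif_pos hy]
    have h6 := hP p.2 p.1 hy.choose (by rwa [Prod.mk.eta]) hy.choose_spec
    rwa [Prod.mk.eta] at h6
  have hVcont : ContinuousOn V X := by
    intro y hy
    apply ContinuousAt.continuousWithinAt
    obtain ⟨x, hxy⟩ := hXexy y hy
    obtain ⟨r, hr, hball⟩ := Metric.isOpen_iff.mp hOopen _ hxy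
    have hmem : ∀ y' ∈ Metric.ball y r, ((x, y') : ℝ × ℝ) ∈ O := by
      intro y' hy'
      apply hball
      rw [Metric.mem_ball] at hy' ⊢
      rw [Prod.dist_eq]
      simp only [dist_self]
      exact max_lt (by simpa using hr) (by simpa using hy')
    have hca : ContinuousAt (fun y' => DyF (fun q => Real.log (ζ q)) ((x, y') : ℝ × ℝ)
        - ε * (H x * F y')) y := by
      have h3 : ContinuousAt (fun y' : ℝ => ((x, y') : ℝ × ℝ)) y :=
        (continuous_const.prodMk continuous_id).continuousAt
      have hJc : ContinuousAt (fun y' => DyF (fun q => Real.log (ζ q)) ((x, y') : ℝ × ℝ)) y :=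
        ContinuousAt.comp (x := y)
          ((DyF_contDiffOn hG hΛ).continuousOn.continuousAt (hG.mem_nhds (hGO hxy))) h3
      have hFc : ContinuousAt F y := hFcont.continuousAt (hXopen.mem_nhds hy)
      exact hJc.sub (continuousAt_const.mul (continuousAt_const.mul hFc))
    apply hca.congr
    filter_upwards [Metric.isOpen_ball.mem_nhds (Metric.mem_ball_self hr)] with y' hy'
    exact hVeq (x, y') (hmem y' hy')
  set B : ℝ → ℝ := fun y => ∫ t in p0.2..y, X.indicator V t with hBdef
  have hB : ∀ y ∈ X, HasDerivAt B (V y) y :=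
    hasDerivAt_primitive hXopen hXconv hVcont (hmemX2 p0 hp0)
  -- Step 2 : log ζ - ε H H - B is independent of y
  have hQ : ∀ (x y y' : ℝ), (x, y) ∈ O → (x, y') ∈ O →
      Real.log (ζ (x, y)) - ε * (H x * H y) - B y
        = Real.log (ζ (x, y')) - ε * (H x * H y') - B y' := by
    intro x y y' hxy hxy'
    apply const_of_hasDerivAt_zero (hSxopen x) (hSxconv x)
      (φ := fun t => Real.log (ζ (x, t)) - ε * (H x * H t) - B t) ?_ hxy hxy'
    intro t ht
    have htG : ((x, t) : ℝ × ℝ) ∈ G := hGO ht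
    have h1 : HasDerivAt (fun t => Real.log (ζ (x, t)))
        (DyF (fun q => Real.log (ζ q)) (x, t)) t := hΛY (x, t) htG
    have h2 : HasDerivAt (fun t => ε * (H x * H t)) (ε * (H x * F t)) t :=
      ((hH t (hmemX2 _ ht)).const_mul (H x)).const_mul ε
    have h3 : HasDerivAt B (V t) t := hB t (hmemX2 _ ht)
    have h4 := (h1.sub h2).sub h3
    have h5 : DyF (fun q => Real.log (ζ q)) (x, t) - ε * (H x * F t) = V t := hVeq (x, t) ht
    rw [show DyF (fun q => Real.log (ζ q)) (x, t) - ε * (H x * F t) - V t = 0 from by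
      rw [h5]; ring] at h4
    exact h4
  set A : ℝ → ℝ := fun x => if hx : ∃ y, ((x, y) : ℝ × ℝ) ∈ O
      then Real.log (ζ (x, hx.choose)) - ε * (H x * H hx.choose) - B hx.choose else 0
    with hAdef
  have hAeq : ∀ p ∈ O, Real.log (ζ p) - ε * (H p.1 * H p.2) - B p.2 = A p.1 := by
    intro p hp
    have hx : ∃ y, ((p.1, y) : ℝ × ℝ) ∈ O := ⟨p.2, by rwa [Prod.mk.eta]⟩
    rw [hAdef]
    simp only
    rw [dif_pos hx]
    have h6 := hQ p.1 p.2 hx.choose (by rwa [Prod.mk.eta]) hx.choose_spec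
    rwa [Prod.mk.eta] at h6
  refine ⟨fun x => Real.exp (A x), fun y => Real.exp (B y), H, ε, hεor, ?_⟩
  intro p hp
  have hz : ζ p = Real.exp (Real.log (ζ p)) := (Real.exp_log (hζpos p (hGO hp))).symm
  rw [hz, ← Real.exp_add, ← Real.exp_add]
  congr 1
  have h7 := hAeq p hp
  linarith [h7]

/-- Lemma: for a positive `C²` function `ζ` on an open `G ⊆ ℝ²` and a symmetric,
open, convex `O ⊆ {∂ₓ∂_y log ζ ≠ 0}`, the restriction of `∂ₓ∂_y log ζ` to `O` is
separable and symmetric iff the restriction of `ζ` to `O` is pseudo-Gaussian. -/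
theorem pseudoGaussian_characterization
    (G : Set (ℝ × ℝ)) (hG : IsOpen G)
    (ζ : ℝ × ℝ → ℝ) (hζpos : ∀ p ∈ G, 0 < ζ p)
    (hζC2 : ContDiffOn ℝ 2 ζ G)
    (O : Set (ℝ × ℝ)) (hOsub : O ⊆ {z ∈ G | mld ζ z ≠ 0})
    (hOsymm : SymmetricSet O) (hOopen : IsOpen O) (hOconv : Convex ℝ O) :
    (SeparableOn (mld ζ) O ∧ SymmetricOn (mld ζ) O) ↔ PseudoGaussianOn ζ O := by
  have hτO : ∀ p ∈ O, ((p.2, p.1) : ℝ × ℝ) ∈ O := by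
    intro p hp
    have h0 : transposeR2 p ∈ transposeR2 '' O := ⟨p, hp, rfl⟩
    rwa [hOsymm] at h0
  constructor
  · rintro ⟨⟨f, g, hsep⟩, hsym⟩
    rcases O.eq_empty_or_nonempty with rfl | ⟨p0, hp0⟩
    · exact ⟨fun _ => 1, fun _ => 1, fun _ => 0, 1, Or.inl rfl,
        fun p hp => absurd hp (Set.notMem_empty p)⟩
    · obtain ⟨A, B, H, ε, hεor, hrep⟩ :=
        pg_of_sep hG hζpos hζC2 hOsub hτO hOopen hOconv hp0 f g hsep
          (fun p hp => hsym p hp)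
      exact ⟨A, B, H, ε, hεor, hrep⟩
  · rintro ⟨f, g, h, ε, hεor, heq⟩
    have hεne : ε ≠ 0 := by rcases hεor with rfl | rfl <;> norm_num
    have hkey := mld_eq_of_pg hG hζpos hζC2 hOsub hOopen f g h ε heq hεne
    constructor
    · refine ⟨fun x => ε * deriv h x, fun y => deriv h y, fun p hp => ?_⟩
      show mld ζ p = ε * deriv h p.1 * deriv h p.2
      rw [hkey p hp]
      ring
    · intro p hp
      have h1 : mld ζ ((p.2, p.1) : ℝ × ℝ) = ε * (deriv h p.2 * deriv h p.1) :=
        hkey _ (hτO p hp)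
      show mld ζ ((p.2, p.1) : ℝ × ℝ) = mld ζ p
      rw [h1, hkey p hp]
      ring
end

section
/- Let U ⊆ ℝ^d be open, and for each i ∈ {1,…,d} let φ_i : Ũ_i × Ũ_i → (0,∞) be a C² function, where Ũ_i := π_i(U), such that every φ_i is regularly non-separable and all but at most one of the φ_i are a.e. non-Gaussian. Set ξ_i := ∂_x∂_y log φ_i. Then for any continuous map B : U → GL_d(ℝ) such that the matrix Λ(u,v) := B(u)ᵀ · diag(ξ₁(u₁,v₁), …, ξ_d(u_d,v_d)) · B(v) has identically vanishing off-diagonal entries for all (u,v) ∈ U × U, it holds that B(u) ∈ M_d for every u ∈ U. -/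
open MeasureTheory Set Matrix

/-- `Q` is a permutation matrix. -/
def IsPermMatrix {d : ℕ} (Q : Matrix (Fin d) (Fin d) ℝ) : Prop :=
  ∃ σ : Equiv.Perm (Fin d), ∀ i j, Q i j = if σ j = i then 1 else 0

/-- `M` is a monomial matrix. -/
def IsMonomialMatrix {d : ℕ} (M : Matrix (Fin d) (Fin d) ℝ) : Prop :=
  ∃ (Λ : Fin d → ℝ) (Q : Matrix (Fin d) (Fin d) ℝ),
    (∀ i, Λ i ≠ 0) ∧ IsPermMatrix Q ∧ M = Matrix.diagonal Λ * Q

/-- `ζ` is strictly non-separable on `G`. -/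
def StrictlyNonSeparableOn (ζ : ℝ × ℝ → ℝ) (G : Set (ℝ × ℝ)) : Prop :=
  ∀ O ⊆ G, IsOpen O → O.Nonempty → ¬ SeparableOn ζ O

/-- `ζ` is strictly non-Gaussian on `G`. -/
def StrictlyNonGaussianOn (ζ : ℝ × ℝ → ℝ) (G : Set (ℝ × ℝ)) : Prop :=
  ∀ O ⊆ G, IsOpen O → O.Nonempty → ¬ PseudoGaussianOn ζ O

/-- `ζ` is a.e. non-separable on `G`: strictly non-separable outside a closed nullset. -/
def AENonSeparableOn (ζ : ℝ × ℝ → ℝ) (G : Set (ℝ × ℝ)) : Prop :=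
  ∃ N : Set (ℝ × ℝ), IsClosed N ∧ volume N = 0 ∧ StrictlyNonSeparableOn ζ (G \ N)

/-- `ζ` is a.e. non-Gaussian on `G`: strictly non-Gaussian outside a closed nullset. -/
def AENonGaussianOn (ζ : ℝ × ℝ → ℝ) (G : Set (ℝ × ℝ)) : Prop :=
  ∃ N : Set (ℝ × ℝ), IsClosed N ∧ volume N = 0 ∧ StrictlyNonGaussianOn ζ (G \ N)

/-- A positive `C²` function on `Ũ × Ũ` is regularly non-separable if it is
a.e. non-separable and its mixed log-derivative is a.e. nonzero on the diagonal. -/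
def RegularlyNonSeparableOn (ζ : ℝ × ℝ → ℝ) (U : Set ℝ) : Prop :=
  (∀ p ∈ U ×ˢ U, 0 < ζ p) ∧ ContDiffOn ℝ 2 ζ (U ×ˢ U) ∧
    AENonSeparableOn ζ (U ×ˢ U) ∧
    ∀ᵐ x ∂((volume : Measure ℝ).restrict U), mld ζ (x, x) ≠ 0

section Aux
open MeasureTheory Set Matrix


/-- Two nonempty open sets of reals contain disjoint nonempty open subsets. -/
lemma exists_disjoint_open_subsets {I₁ J₁ : Set ℝ} (hI : IsOpen I₁) (hJ : IsOpen J₁)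
    (hIne : I₁.Nonempty) (hJne : J₁.Nonempty) :
    ∃ I₂ J₂ : Set ℝ, IsOpen I₂ ∧ IsOpen J₂ ∧ I₂.Nonempty ∧ J₂.Nonempty ∧
      I₂ ⊆ I₁ ∧ J₂ ⊆ J₁ ∧ Disjoint I₂ J₂ := by
  obtain ⟨x, hx⟩ := hIne
  obtain ⟨y, hy⟩ := hJne
  obtain ⟨r, hr, hrI⟩ := Metric.isOpen_iff.1 hI x hx
  obtain ⟨s, hs, hsJ⟩ := Metric.isOpen_iff.1 hJ y hy
  rcases le_total x y with hxy | hxy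
  · refine ⟨Ioo (x - r) x, Ioo y (y + s), isOpen_Ioo, isOpen_Ioo, ⟨x - r/2, by constructor <;> linarith⟩,
      ⟨y + s/2, by constructor <;> linarith⟩, ?_, ?_, ?_⟩
    · intro t ht
      apply hrI
      rw [Real.ball_eq_Ioo]
      exact ⟨ht.1, by linarith [ht.2]⟩
    · intro t ht
      apply hsJ
      rw [Real.ball_eq_Ioo]
      exact ⟨by linarith [ht.1], ht.2⟩
    · rw [Set.disjoint_left]
      rintro t ⟨-, h2⟩ ⟨h3, -⟩
      linarith
  · refine ⟨Ioo x (x + r), Ioo (y - s) y, isOpen_Ioo, isOpen_Ioo, ⟨x + r/2, by constructor <;> linarith⟩,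
      ⟨y - s/2, by constructor <;> linarith⟩, ?_, ?_, ?_⟩
    · intro t ht
      apply hrI
      rw [Real.ball_eq_Ioo]
      exact ⟨by linarith [ht.1], ht.2⟩
    · intro t ht
      apply hsJ
      rw [Real.ball_eq_Ioo]
      exact ⟨ht.1, by linarith [ht.2]⟩
    · rw [Set.disjoint_left]
      rintro t ⟨h1, -⟩ ⟨-, h4⟩
      linarith

lemma sep_contra {ζ : ℝ × ℝ → ℝ} {G O : Set (ℝ × ℝ)} (h : AENonSeparableOn ζ G)
    (hOG : O ⊆ G) (hO : IsOpen O) (hne : O.Nonempty) (hsep : SeparableOn ζ O) : False := by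
  obtain ⟨N, hNcl, hNnull, hstrict⟩ := h
  have hO' : IsOpen (O \ N) := hO.sdiff hNcl
  have hne' : (O \ N).Nonempty := by
    rw [Set.nonempty_iff_ne_empty]
    intro hemp
    have hsub : O ⊆ N := by
      intro p hp
      by_contra hpN
      exact absurd hemp (Set.nonempty_iff_ne_empty.1 ⟨p, hp, hpN⟩)
    have : volume O ≤ volume N := measure_mono hsub
    have hpos : 0 < volume O := hO.measure_pos volume hne
    rw [hNnull] at this
    exact absurd (le_antisymm this zero_le) (ne_of_gt hpos)
  refine hstrict (O \ N) (fun p hp => ⟨hOG hp.1, hp.2⟩) hO' hne' ?_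
  obtain ⟨f, g, hfg⟩ := hsep
  exact ⟨f, g, fun p hp => hfg p hp.1⟩

lemma gauss_contra {ζ : ℝ × ℝ → ℝ} {G O : Set (ℝ × ℝ)} (h : AENonGaussianOn ζ G)
    (hOG : O ⊆ G) (hO : IsOpen O) (hne : O.Nonempty) (hpg : PseudoGaussianOn ζ O) : False := by
  obtain ⟨N, hNcl, hNnull, hstrict⟩ := h
  have hO' : IsOpen (O \ N) := hO.sdiff hNcl
  have hne' : (O \ N).Nonempty := by
    rw [Set.nonempty_iff_ne_empty]
    intro hemp
    have hsub : O ⊆ N := by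
      intro p hp
      by_contra hpN
      exact absurd hemp (Set.nonempty_iff_ne_empty.1 ⟨p, hp, hpN⟩)
    have : volume O ≤ volume N := measure_mono hsub
    have hpos : 0 < volume O := hO.measure_pos volume hne
    rw [hNnull] at this
    exact absurd (le_antisymm this zero_le) (ne_of_gt hpos)
  refine hstrict (O \ N) (fun p hp => ⟨hOG hp.1, hp.2⟩) hO' hne' ?_
  obtain ⟨f, g, hh, ε, hε, hfg⟩ := hpg
  exact ⟨f, g, hh, ε, hε, fun p hp => hfg p hp.1⟩


/-- A matrix with a unit determinant in which no column has two nonzero entries is monomial. -/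
lemma isMonomial_of_cols {d : ℕ} {M : Matrix (Fin d) (Fin d) ℝ} (hdet : IsUnit M.det)
    (hcol : ∀ j k l, k ≠ l → M k j ≠ 0 → M l j ≠ 0 → False) : IsMonomialMatrix M := by
  have hdet' : M.det ≠ 0 := hdet.ne_zero
  have hex : ∀ j, ∃ k, M k j ≠ 0 := by
    intro j
    by_contra hall
    push_neg at hall
    exact hdet' (Matrix.det_eq_zero_of_column_eq_zero j hall)
  choose r hr using hex
  have huniq : ∀ j k, M k j ≠ 0 → k = r j := by
    intro j k hk
    by_contra hne
    exact hcol j k (r j) hne hk (hr j)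
  have hinj : Function.Injective r := by
    intro j₁ j₂ hj
    by_contra hne
    set i := r j₁ with hi
    set v : Fin d → ℝ := fun j => if j = j₁ then M i j₂ else if j = j₂ then -(M i j₁) else 0 with hv
    have hMv : M.mulVec v = 0 := by
      funext k
      show (∑ j, M k j * v j) = 0
      have : ∀ j, M k j * v j =
          (if j = j₁ then M k j₁ * M i j₂ else 0) + (if j = j₂ then -(M k j₂ * M i j₁) else 0) := by
        intro j
        by_cases h1 : j = j₁
        · subst h1; simp [hv, hne]
        · by_cases h2 : j = j₂
          · subst h2; simp [hv, h1]
          · simp [hv, h1, h2]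
      rw [Finset.sum_congr rfl (fun j _ => this j), Finset.sum_add_distrib,
        Finset.sum_ite_eq' Finset.univ j₁, Finset.sum_ite_eq' Finset.univ j₂]
      simp only [Finset.mem_univ, if_true]
      by_cases hk : k = i
      · subst hk
        ring
      · have h1 : M k j₁ = 0 := by
          by_contra h
          exact hk (huniq j₁ k h)
        have h2 : M k j₂ = 0 := by
          by_contra h
          exact hk ((huniq j₂ k h).trans hj.symm)
        rw [h1, h2]
        ring
    have hv0 : v = 0 := by
      have := congrArg (fun w => M⁻¹.mulVec w) hMv
      simpa [Matrix.mulVec_mulVec, Matrix.nonsing_inv_mul M hdet] using this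
    have : v j₂ ≠ 0 := by
      show (if j₂ = j₁ then M i j₂ else if j₂ = j₂ then -(M i j₁) else 0) ≠ 0
      rw [if_neg (Ne.symm hne), if_pos rfl]
      simpa using hr j₁
    rw [hv0] at this
    exact this rfl
  have hbij : Function.Bijective r := Finite.injective_iff_bijective.1 hinj
  set σ : Equiv.Perm (Fin d) := Equiv.ofBijective r hbij with hσ
  have hσr : ∀ j, σ j = r j := fun j => rfl
  refine ⟨fun i => M i (σ.symm i), fun i j => if σ j = i then 1 else 0,
    fun i => ?_, ⟨σ, fun i j => rfl⟩, ?_⟩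
  · show M i (σ.symm i) ≠ 0
    have h1 : σ (σ.symm i) = i := σ.apply_symm_apply i
    have h2 : r (σ.symm i) = i := by rw [← hσr]; exact h1
    have h3 := hr (σ.symm i)
    rw [h2] at h3
    exact h3
  · funext i j
    refine Eq.trans ?_ (Matrix.diagonal_mul _ _ _ _).symm
    show M i j = M i (σ.symm i) * (if σ j = i then 1 else 0)
    by_cases h : σ j = i
    · rw [if_pos h]
      have : σ.symm i = j := by rw [← h, Equiv.symm_apply_apply]
      rw [this]
      ring
    · rw [if_neg h, mul_zero]
      by_contra hne
      exact h ((huniq j i hne).symm ▸ (hσr j).symm ▸ rfl)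

/-- Key local structure: if `mld ζ` factors as `α(x)β(y)` on an open rectangle, then
`ζ` has a pseudo-Gaussian-type decomposition there, with explicit integral exponents. -/
lemma rect_decomp (ζ : ℝ × ℝ → ℝ) {a b c e x₀ y₀ : ℝ}
    (hx₀ : x₀ ∈ Ioo a b) (hy₀ : y₀ ∈ Ioo c e)
    (hpos : ∀ p ∈ Ioo a b ×ˢ Ioo c e, 0 < ζ p)
    (hC2 : ContDiffOn ℝ 2 ζ (Ioo a b ×ˢ Ioo c e))
    (α β : ℝ → ℝ) (hα : ContinuousOn α (Ioo a b)) (hβ : ContinuousOn β (Ioo c e))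
    (heq : ∀ x ∈ Ioo a b, ∀ y ∈ Ioo c e, mld ζ (x, y) = α x * β y) :
    ∃ f g : ℝ → ℝ, ∀ x ∈ Ioo a b, ∀ y ∈ Ioo c e,
      ζ (x, y) = f x * g y * Real.exp ((∫ t in x₀..x, α t) * (∫ t in y₀..y, β t)) := by
  have hRopen : IsOpen (Ioo a b ×ˢ Ioo c e) := isOpen_Ioo.prod isOpen_Ioo
  set L : ℝ × ℝ → ℝ := fun p => Real.log (ζ p) with hL
  have hL2 : ∀ x ∈ Ioo a b, ∀ y ∈ Ioo c e, ContDiffAt ℝ 2 L (x, y) := by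
    intro x hx y hy
    exact (hC2.contDiffAt (hRopen.mem_nhds ⟨hx, hy⟩)).log (ne_of_gt (hpos (x, y) ⟨hx, hy⟩))
  set F1 : ℝ × ℝ → ℝ := fun p => fderiv ℝ L p (0, 1) with hF1def
  set G : ℝ → ℝ → ℝ := fun x y => deriv (fun y' => L (x, y')) y with hGdef
  -- the partial derivative in `y` equals `F1`
  have hGy : ∀ x ∈ Ioo a b, ∀ y ∈ Ioo c e, HasDerivAt (fun y' => L (x, y')) (F1 (x, y)) y := by
    intro x hx y hy
    have hdiff : DifferentiableAt ℝ L (x, y) :=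
      (hL2 x hx y hy).differentiableAt (by norm_num)
    have h1 : HasDerivAt (fun y' : ℝ => (x, y')) (((0 : ℝ), (1 : ℝ))) y :=
      (hasDerivAt_const _ _).prodMk (hasDerivAt_id _)
    exact hdiff.hasFDerivAt.comp_hasDerivAt y h1
  have hG : ∀ x ∈ Ioo a b, ∀ y ∈ Ioo c e, G x y = F1 (x, y) := by
    intro x hx y hy
    exact (hGy x hx y hy).deriv
  have hF1c : ∀ x ∈ Ioo a b, ∀ y ∈ Ioo c e, ContDiffAt ℝ 1 F1 (x, y) := by
    intro x hx y hy
    exact ((hL2 x hx y hy).fderiv_right (by norm_num)).clm_apply contDiffAt_const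
  -- the `x`-derivative of `G · y` is `mld ζ`
  have hmld : ∀ x ∈ Ioo a b, ∀ y ∈ Ioo c e, HasDerivAt (fun x' => G x' y) (mld ζ (x, y)) x := by
    intro x hx y hy
    have hd : DifferentiableAt ℝ F1 (x, y) :=
      (hF1c x hx y hy).differentiableAt (by norm_num)
    have h1 : HasDerivAt (fun x' : ℝ => (x', y)) (((1 : ℝ), (0 : ℝ))) x :=
      (hasDerivAt_id _).prodMk (hasDerivAt_const _ _)
    have h2 : HasDerivAt (fun x' => F1 (x', y)) (fderiv ℝ F1 (x, y) (1, 0)) x := by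
      have h2' := hd.hasFDerivAt.comp_hasDerivAt x h1
      exact h2'
    have heq' : (fun x' => G x' y) =ᶠ[nhds x] (fun x' => F1 (x', y)) :=
      Filter.eventuallyEq_of_mem (isOpen_Ioo.mem_nhds hx) (fun x' hx' => hG x' hx' y hy)
    have h3 : HasDerivAt (fun x' => G x' y) (fderiv ℝ F1 (x, y) (1, 0)) x :=
      h2.congr_of_eventuallyEq heq'
    have hm : mld ζ (x, y) = deriv (fun x' => G x' y) x := rfl
    rw [hm, h3.deriv]
    exact h3
  -- continuity of `G x₀ ·`
  have hGcont : ∀ x ∈ Ioo a b, ContinuousOn (fun y => G x y) (Ioo c e) := by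
    intro x hx y hy
    have hc : ContinuousAt (fun y' => F1 (x, y')) y :=
      ((hF1c x hx y hy).continuousAt).comp ((continuous_const.prodMk continuous_id).continuousAt)
    have : ContinuousAt (fun y' => G x y') y := by
      apply hc.congr
      exact Filter.eventuallyEq_of_mem (isOpen_Ioo.mem_nhds hy) (fun y' hy' => (hG x hx y' hy').symm)
    exact this.continuousWithinAt
  set A : ℝ → ℝ := fun x => ∫ t in x₀..x, α t with hA
  set Bb : ℝ → ℝ := fun y => ∫ t in y₀..y, β t with hBb
  -- Step 1 : G x y = G x₀ y + A x * β y
  have step1 : ∀ x ∈ Ioo a b, ∀ y ∈ Ioo c e, G x y = G x₀ y + A x * β y := by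
    intro x hx y hy
    have hIcc : uIcc x₀ x ⊆ Ioo a b := Set.ordConnected_Ioo.uIcc_subset hx₀ hx
    have hderiv : ∀ t ∈ uIcc x₀ x, HasDerivAt (fun t => G t y) (α t * β y) t := by
      intro t ht
      have := hmld t (hIcc ht) y hy
      rwa [heq t (hIcc ht) y hy] at this
    have hint : IntervalIntegrable (fun t => α t * β y) volume x₀ x :=
      ((hα.mono hIcc).mul continuousOn_const).intervalIntegrable
    have hftc := intervalIntegral.integral_eq_sub_of_hasDerivAt hderiv hint
    have hmul : (∫ t in x₀..x, α t * β y) = A x * β y :=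
      intervalIntegral.integral_mul_const (β y) α
    rw [hmul] at hftc
    linarith [hftc]
  -- Step 2 : integrate in `y`
  have step2 : ∀ x ∈ Ioo a b, ∀ y ∈ Ioo c e,
      L (x, y) = L (x, y₀) + (∫ s in y₀..y, G x₀ s) + A x * Bb y := by
    intro x hx y hy
    have hIcc : uIcc y₀ y ⊆ Ioo c e := Set.ordConnected_Ioo.uIcc_subset hy₀ hy
    have hderiv : ∀ s ∈ uIcc y₀ y, HasDerivAt (fun s => L (x, s)) (G x₀ s + A x * β s) s := by
      intro s hs
      have h1 := hGy x hx s (hIcc hs)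
      rw [← hG x hx s (hIcc hs), step1 x hx s (hIcc hs)] at h1
      exact h1
    have hint1 : IntervalIntegrable (fun s => G x₀ s) volume y₀ y :=
      ((hGcont x₀ hx₀).mono hIcc).intervalIntegrable
    have hint2 : IntervalIntegrable (fun s => A x * β s) volume y₀ y :=
      (continuousOn_const.mul (hβ.mono hIcc)).intervalIntegrable
    have hftc := intervalIntegral.integral_eq_sub_of_hasDerivAt hderiv (hint1.add hint2)
    rw [intervalIntegral.integral_add hint1 hint2,
      intervalIntegral.integral_const_mul] at hftc
    have : (∫ s in y₀..y, β s) = Bb y := rfl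
    rw [this] at hftc
    linarith [hftc]
  refine ⟨fun x => Real.exp (L (x, y₀)), fun y => Real.exp (∫ s in y₀..y, G x₀ s), ?_⟩
  intro x hx y hy
  have hz : ζ (x, y) = Real.exp (L (x, y)) := (Real.exp_log (hpos (x, y) ⟨hx, hy⟩)).symm
  rw [hz, step2 x hx y hy, Real.exp_add, Real.exp_add]

/-- If the mixed log-derivative vanishes on an open rectangle, `ζ` is separable there. -/
lemma rect_sep (ζ : ℝ × ℝ → ℝ) {a b c e : ℝ} (hab : a < b) (hce : c < e)
    (hpos : ∀ p ∈ Ioo a b ×ˢ Ioo c e, 0 < ζ p)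
    (hC2 : ContDiffOn ℝ 2 ζ (Ioo a b ×ˢ Ioo c e))
    (hzero : ∀ x ∈ Ioo a b, ∀ y ∈ Ioo c e, mld ζ (x, y) = 0) :
    SeparableOn ζ (Ioo a b ×ˢ Ioo c e) := by
  have hx₀ : (a + b) / 2 ∈ Ioo a b := ⟨by linarith, by linarith⟩
  have hy₀ : (c + e) / 2 ∈ Ioo c e := ⟨by linarith, by linarith⟩
  obtain ⟨f, g, hfg⟩ := rect_decomp ζ hx₀ hy₀ hpos hC2 (fun _ => 0) (fun _ => 0)
    continuousOn_const continuousOn_const (by intro x hx y hy; rw [hzero x hx y hy]; ring)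
  refine ⟨f, g, ?_⟩
  rintro ⟨x, y⟩ ⟨hx, hy⟩
  have := hfg x hx y hy
  simpa [intervalIntegral.integral_zero] using this

/-- If the mixed log-derivative factors on an open rectangle, then on some open
subset `ζ` is separable or pseudo-Gaussian. -/
lemma rect_pg (ζ : ℝ × ℝ → ℝ) {a b c e : ℝ} (hab : a < b) (hce : c < e)
    (hpos : ∀ p ∈ Ioo a b ×ˢ Ioo c e, 0 < ζ p)
    (hC2 : ContDiffOn ℝ 2 ζ (Ioo a b ×ˢ Ioo c e))
    (α β : ℝ → ℝ) (hα : ContinuousOn α (Ioo a b)) (hβ : ContinuousOn β (Ioo c e))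
    (heq : ∀ x ∈ Ioo a b, ∀ y ∈ Ioo c e, mld ζ (x, y) = α x * β y) :
    (∃ O ⊆ Ioo a b ×ˢ Ioo c e, IsOpen O ∧ O.Nonempty ∧ SeparableOn ζ O) ∨
    (∃ O ⊆ Ioo a b ×ˢ Ioo c e, IsOpen O ∧ O.Nonempty ∧ PseudoGaussianOn ζ O) := by
  classical
  have hx₀ : (a + b) / 2 ∈ Ioo a b := ⟨by linarith, by linarith⟩
  have hy₀ : (c + e) / 2 ∈ Ioo c e := ⟨by linarith, by linarith⟩
  set x₀ := (a + b) / 2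
  set y₀ := (c + e) / 2
  obtain ⟨f, g, hfg⟩ := rect_decomp ζ hx₀ hy₀ hpos hC2 α β hα hβ heq
  set A : ℝ → ℝ := fun x => ∫ t in x₀..x, α t with hA
  set Bb : ℝ → ℝ := fun y => ∫ t in y₀..y, β t with hBb
  have hA0 : A x₀ = 0 := intervalIntegral.integral_same
  have hB0 : Bb y₀ = 0 := intervalIntegral.integral_same
  by_cases hAz : ∀ x ∈ Ioo a b, A x = 0
  · left
    refine ⟨Ioo a b ×ˢ Ioo c e, le_refl _, isOpen_Ioo.prod isOpen_Ioo,
      ⟨(x₀, y₀), hx₀, hy₀⟩, f, g, ?_⟩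
    rintro ⟨x, y⟩ ⟨hx, hy⟩
    rw [hfg x hx y hy]
    rw [show (∫ t in x₀..x, α t) = A x from rfl, hAz x hx]
    simp
  by_cases hBz : ∀ y ∈ Ioo c e, Bb y = 0
  · left
    refine ⟨Ioo a b ×ˢ Ioo c e, le_refl _, isOpen_Ioo.prod isOpen_Ioo,
      ⟨(x₀, y₀), hx₀, hy₀⟩, f, g, ?_⟩
    rintro ⟨x, y⟩ ⟨hx, hy⟩
    rw [hfg x hx y hy]
    rw [show (∫ t in y₀..y, β t) = Bb y from rfl, hBz y hy]
    simp
  push_neg at hAz hBz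
  obtain ⟨x₁, hx₁, hAx₁⟩ := hAz
  obtain ⟨y₁, hy₁, hBy₁⟩ := hBz
  right
  -- basic `ζ`-values
  have hfx : ∀ x ∈ Ioo a b, ζ (x, y₀) = f x * g y₀ := by
    intro x hx
    have := hfg x hx y₀ hy₀
    rw [show (∫ t in y₀..y₀, β t) = Bb y₀ from rfl, hB0] at this
    simpa using this
  have hgy : ∀ y ∈ Ioo c e, ζ (x₀, y) = f x₀ * g y := by
    intro y hy
    have := hfg x₀ hx₀ y hy
    rw [show (∫ t in x₀..x₀, α t) = A x₀ from rfl, hA0] at this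
    simpa using this
  -- the exponential identity
  have hExp : ∀ x ∈ Ioo a b, ∀ y ∈ Ioo c e,
      Real.exp (A x * Bb y) = ζ (x, y) * ζ (x₀, y₀) / (ζ (x, y₀) * ζ (x₀, y)) := by
    intro x hx y hy
    have h1 := hfx x hx
    have h2 := hgy y hy
    have h3 := hfx x₀ hx₀
    have h4 := hfg x hx y hy
    have hd1 : ζ (x, y₀) > 0 := hpos _ ⟨hx, hy₀⟩
    have hd2 : ζ (x₀, y) > 0 := hpos _ ⟨hx₀, hy⟩
    rw [eq_div_iff (by positivity)]
    rw [h4, h1, h2, h3]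
    ring
  have hzc : ContinuousOn ζ (Ioo a b ×ˢ Ioo c e) := hC2.continuousOn
  -- continuity of A and Bb
  have hAc : ContinuousOn A (Ioo a b) := by
    have hval : ∀ x ∈ Ioo a b, A x =
        Real.log (ζ (x, y₁) * ζ (x₀, y₀) / (ζ (x, y₀) * ζ (x₀, y₁))) / Bb y₁ := by
      intro x hx
      rw [← hExp x hx y₁ hy₁, Real.log_exp, mul_div_assoc, div_self hBy₁, mul_one]
    have hcont : ContinuousOn (fun x =>
        Real.log (ζ (x, y₁) * ζ (x₀, y₀) / (ζ (x, y₀) * ζ (x₀, y₁))) / Bb y₁) (Ioo a b) := by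
      apply ContinuousOn.div_const
      apply ContinuousOn.log
      · apply ContinuousOn.div
        · exact (hzc.comp (continuous_id.prodMk continuous_const).continuousOn
            (fun x hx => ⟨hx, hy₁⟩)).mul continuousOn_const
        · exact (hzc.comp (continuous_id.prodMk continuous_const).continuousOn
            (fun x hx => ⟨hx, hy₀⟩)).mul continuousOn_const
        · intro x hx
          have := hpos (x, y₀) ⟨hx, hy₀⟩
          have := hpos (x₀, y₁) ⟨hx₀, hy₁⟩
          positivity
      · intro x hx
        rw [← hExp x hx y₁ hy₁]
        positivity
    exact hcont.congr hval
  have hBc : ContinuousOn Bb (Ioo c e) := by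
    have hval : ∀ y ∈ Ioo c e, Bb y =
        Real.log (ζ (x₁, y) * ζ (x₀, y₀) / (ζ (x₁, y₀) * ζ (x₀, y))) / A x₁ := by
      intro y hy
      rw [← hExp x₁ hx₁ y hy, Real.log_exp, mul_comm, mul_div_assoc, div_self hAx₁, mul_one]
    have hcont : ContinuousOn (fun y =>
        Real.log (ζ (x₁, y) * ζ (x₀, y₀) / (ζ (x₁, y₀) * ζ (x₀, y))) / A x₁) (Ioo c e) := by
      apply ContinuousOn.div_const
      apply ContinuousOn.log
      · apply ContinuousOn.div
        · exact (hzc.comp (continuous_const.prodMk continuous_id).continuousOn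
            (fun y hy => ⟨hx₁, hy⟩)).mul continuousOn_const
        · exact continuousOn_const.mul (hzc.comp (continuous_const.prodMk continuous_id).continuousOn
            (fun y hy => ⟨hx₀, hy⟩))
        · intro y hy
          have := hpos (x₁, y₀) ⟨hx₁, hy₀⟩
          have := hpos (x₀, y) ⟨hx₀, hy⟩
          positivity
      · intro y hy
        rw [← hExp x₁ hx₁ y hy]
        positivity
    exact hcont.congr hval
  -- constant-sign neighbourhoods
  set s₁ : ℝ := if 0 < A x₁ then 1 else -1 with hs₁
  set s₂ : ℝ := if 0 < Bb y₁ then 1 else -1 with hs₂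
  have hs₁sq : s₁ * s₁ = 1 := by rw [hs₁]; split_ifs <;> norm_num
  have hs₂sq : s₂ * s₂ = 1 := by rw [hs₂]; split_ifs <;> norm_num
  set I₁ : Set ℝ := Ioo a b ∩ (fun x => s₁ * A x) ⁻¹' Ioi 0 with hI₁
  set J₁ : Set ℝ := Ioo c e ∩ (fun y => s₂ * Bb y) ⁻¹' Ioi 0 with hJ₁
  have hI₁open : IsOpen I₁ :=
    (continuousOn_const.mul hAc).isOpen_inter_preimage isOpen_Ioo isOpen_Ioi
  have hJ₁open : IsOpen J₁ :=
    (continuousOn_const.mul hBc).isOpen_inter_preimage isOpen_Ioo isOpen_Ioi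
  have hx₁I₁ : x₁ ∈ I₁ := by
    refine ⟨hx₁, ?_⟩
    simp only [Set.mem_preimage, Set.mem_Ioi, hs₁]
    rcases lt_or_gt_of_ne hAx₁ with h | h
    · rw [if_neg (by linarith)]; linarith
    · rw [if_pos h]; linarith
  have hy₁J₁ : y₁ ∈ J₁ := by
    refine ⟨hy₁, ?_⟩
    simp only [Set.mem_preimage, Set.mem_Ioi, hs₂]
    rcases lt_or_gt_of_ne hBy₁ with h | h
    · rw [if_neg (by linarith)]; linarith
    · rw [if_pos h]; linarith
  obtain ⟨I₂, J₂, hI₂open, hJ₂open, hI₂ne, hJ₂ne, hI₂sub, hJ₂sub, hdisj⟩ :=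
    exists_disjoint_open_subsets hI₁open hJ₁open ⟨x₁, hx₁I₁⟩ ⟨y₁, hy₁J₁⟩
  set h : ℝ → ℝ := fun t => if t ∈ I₂ then s₁ * A t else s₂ * Bb t with hh
  refine ⟨I₂ ×ˢ J₂, ?_, hI₂open.prod hJ₂open, hI₂ne.prod hJ₂ne,
    f, g, h, s₁ * s₂, ?_, ?_⟩
  · rintro ⟨x, y⟩ ⟨hx, hy⟩
    exact ⟨(hI₂sub hx).1, (hJ₂sub hy).1⟩
  · rw [hs₁, hs₂]
    split_ifs <;> norm_num
  · rintro ⟨x, y⟩ ⟨hx, hy⟩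
    have hxI : x ∈ Ioo a b := (hI₂sub hx).1
    have hyJ : y ∈ Ioo c e := (hJ₂sub hy).1
    have hyn : y ∉ I₂ := fun hmem => (Set.disjoint_left.1 hdisj hmem) hy
    have hhx : h x = s₁ * A x := by rw [hh]; exact if_pos hx
    have hhy : h y = s₂ * Bb y := by rw [hh]; exact if_neg hyn
    rw [hfg x hxI y hyJ]
    congr 1
    rw [hhx, hhy]
    have : s₁ * s₂ * (s₁ * A x * (s₂ * Bb y)) = (s₁ * s₁) * (s₂ * s₂) * (A x * Bb y) := by ring
    rw [this, hs₁sq, hs₂sq, one_mul, one_mul]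

/-- Slice lemma, zero case: if `X · m j` vanishes on `V` then `mld (φ m)` vanishes on an
open square inside the `m`-th coordinate image. -/
lemma slice_zero {d : ℕ} {U : Set (Fin d → ℝ)} {φ : Fin d → ℝ × ℝ → ℝ}
    {B X : (Fin d → ℝ) → Matrix (Fin d) (Fin d) ℝ}
    (star : ∀ u ∈ U, ∀ v ∈ U, ∀ k j, mld (φ k) (u k, v k) * B v k j =
      X u k j * (((B u)ᵀ * Matrix.diagonal (fun n => mld (φ n) (u n, v n)) * B v) j j))
    {V : Set (Fin d → ℝ)} (hVopen : IsOpen V) (hVU : V ⊆ U)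
    {m j : Fin d} (hBm : ∀ u ∈ V, B u m j ≠ 0)
    (hXm : ∀ u ∈ V, X u m j = 0) {u₀ : Fin d → ℝ} (hu₀ : u₀ ∈ V) :
    ∃ a b : ℝ, a < b ∧ Ioo a b ⊆ (fun y => y m) '' U ∧
      ∀ x ∈ Ioo a b, ∀ y ∈ Ioo a b, mld (φ m) (x, y) = 0 := by
  have hupd : Continuous (fun t : ℝ => Function.update u₀ m t) :=
    continuous_const.update m continuous_id
  have hSopen : IsOpen {t : ℝ | Function.update u₀ m t ∈ V} := hVopen.preimage hupd
  have hmem : u₀ m ∈ {t : ℝ | Function.update u₀ m t ∈ V} := by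
    simp only [Set.mem_setOf_eq, Function.update_eq_self]
    exact hu₀
  obtain ⟨r, hr, hball⟩ := Metric.isOpen_iff.1 hSopen _ hmem
  rw [Real.ball_eq_Ioo] at hball
  refine ⟨u₀ m - r, u₀ m + r, by linarith, ?_, ?_⟩
  · intro x hx
    exact ⟨Function.update u₀ m x, hVU (hball hx), Function.update_self m x u₀⟩
  · intro x hx y hy
    have hu : Function.update u₀ m x ∈ V := hball hx
    have hv : Function.update u₀ m y ∈ V := hball hy
    have := star _ (hVU hu) _ (hVU hv) m j
    rw [Function.update_self, Function.update_self, hXm _ hu, zero_mul] at this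
    exact (mul_eq_zero.1 this).resolve_right (hBm _ hv)

/-- Slice lemma, factorization case. -/
lemma slice_fact {d : ℕ} {U : Set (Fin d → ℝ)} {φ : Fin d → ℝ × ℝ → ℝ}
    {B X : (Fin d → ℝ) → Matrix (Fin d) (Fin d) ℝ}
    (star : ∀ u ∈ U, ∀ v ∈ U, ∀ k j, mld (φ k) (u k, v k) * B v k j =
      X u k j * (((B u)ᵀ * Matrix.diagonal (fun n => mld (φ n) (u n, v n)) * B v) j j))
    (hXcont : ∀ i j', ContinuousOn (fun u => X u i j') U)
    (hBent : ∀ i j', ContinuousOn (fun u => B u i j') U)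
    {V : Set (Fin d → ℝ)} (hVopen : IsOpen V) (hVU : V ⊆ U)
    {k l j : Fin d} (hkl : k ≠ l)
    (hBk : ∀ u ∈ V, B u k j ≠ 0) (hBl : ∀ u ∈ V, B u l j ≠ 0)
    {u₂ : Fin d → ℝ} (hu₂ : u₂ ∈ V) (hX2 : X u₂ l j ≠ 0)
    {u₀ : Fin d → ℝ} (hu₀ : u₀ ∈ V) :
    ∃ a b c e : ℝ, a < b ∧ c < e ∧ Ioo a b ⊆ (fun y => y k) '' U ∧
      Ioo c e ⊆ (fun y => y k) '' U ∧
      ∃ α β : ℝ → ℝ, ContinuousOn α (Ioo a b) ∧ ContinuousOn β (Ioo c e) ∧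
        ∀ x ∈ Ioo a b, ∀ y ∈ Ioo c e, mld (φ k) (x, y) = α x * β y := by
  -- shrink to where `X · l j ≠ 0`
  set V₂ : Set (Fin d → ℝ) := V ∩ (fun u => X u l j) ⁻¹' {(0:ℝ)}ᶜ with hV₂
  have hV₂open : IsOpen V₂ :=
    ((hXcont l j).mono hVU).isOpen_inter_preimage hVopen isOpen_compl_singleton
  have hu₂V₂ : u₂ ∈ V₂ := ⟨hu₂, hX2⟩
  have hV₂V : V₂ ⊆ V := Set.inter_subset_left
  -- slices
  have hupd2 : Continuous (fun t : ℝ => Function.update u₂ k t) :=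
    continuous_const.update k continuous_id
  have hupd0 : Continuous (fun t : ℝ => Function.update u₀ k t) :=
    continuous_const.update k continuous_id
  have hS2open : IsOpen {t : ℝ | Function.update u₂ k t ∈ V₂} := hV₂open.preimage hupd2
  have hS0open : IsOpen {t : ℝ | Function.update u₀ k t ∈ V} := hVopen.preimage hupd0
  have hmem2 : u₂ k ∈ {t : ℝ | Function.update u₂ k t ∈ V₂} := by
    simp only [Set.mem_setOf_eq, Function.update_eq_self]; exact hu₂V₂
  have hmem0 : u₀ k ∈ {t : ℝ | Function.update u₀ k t ∈ V} := by
    simp only [Set.mem_setOf_eq, Function.update_eq_self]; exact hu₀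
  obtain ⟨r, hr, hball2⟩ := Metric.isOpen_iff.1 hS2open _ hmem2
  obtain ⟨s, hs, hball0⟩ := Metric.isOpen_iff.1 hS0open _ hmem0
  rw [Real.ball_eq_Ioo] at hball2 hball0
  set K : ℝ := mld (φ l) (u₂ l, u₀ l) with hK
  refine ⟨u₂ k - r, u₂ k + r, u₀ k - s, u₀ k + s, by linarith, by linarith, ?_, ?_,
    fun x => K * X (Function.update u₂ k x) k j / X (Function.update u₂ k x) l j,
    fun y => B (Function.update u₀ k y) l j / B (Function.update u₀ k y) k j,
    ?_, ?_, ?_⟩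
  · intro x hx
    exact ⟨Function.update u₂ k x, hVU (hV₂V (hball2 hx)), Function.update_self k x u₂⟩
  · intro y hy
    exact ⟨Function.update u₀ k y, hVU (hball0 hy), Function.update_self k y u₀⟩
  · apply ContinuousOn.div
    · exact continuousOn_const.mul ((hXcont k j).comp hupd2.continuousOn
        (fun x hx => hVU (hV₂V (hball2 hx))))
    · exact (hXcont l j).comp hupd2.continuousOn (fun x hx => hVU (hV₂V (hball2 hx)))
    · intro x hx
      exact (hball2 hx).2
  · apply ContinuousOn.div
    · exact (hBent l j).comp hupd0.continuousOn (fun y hy => hVU (hball0 hy))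
    · exact (hBent k j).comp hupd0.continuousOn (fun y hy => hVU (hball0 hy))
    · intro y hy
      exact hBk _ (hball0 hy)
  · intro x hx y hy
    set u : Fin d → ℝ := Function.update u₂ k x with hu
    set v : Fin d → ℝ := Function.update u₀ k y with hv
    have huV₂ : u ∈ V₂ := hball2 hx
    have hvV : v ∈ V := hball0 hy
    have h1 := star u (hVU (hV₂V huV₂)) v (hVU hvV) k j
    have h2 := star u (hVU (hV₂V huV₂)) v (hVU hvV) l j
    have huk : u k = x := Function.update_self k x u₂
    have hvk : v k = y := Function.update_self k y u₀
    have hul : u l = u₂ l := Function.update_of_ne (Ne.symm hkl) x u₂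
    have hvl : v l = u₀ l := Function.update_of_ne (Ne.symm hkl) y u₀
    rw [huk, hvk] at h1
    rw [hul, hvl] at h2
    have hXul : X u l j ≠ 0 := huV₂.2
    have hBvk : B v k j ≠ 0 := hBk _ hvV
    have hBvl : B v l j ≠ 0 := hBl _ hvV
    rw [← hK] at h2
    change mld (φ k) (x, y) = K * X u k j / X u l j * (B v l j / B v k j)
    rw [div_mul_div_comm, eq_div_iff (mul_ne_zero hXul hBvk)]
    linear_combination X u l j * h1 - X u k j * h2

end Aux

/-- Lemma: if `B : U → GL_d(ℝ)` is continuous and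
`B(u)ᵀ · diag(ξᵢ(uᵢ,vᵢ)) · B(v)` has vanishing off-diagonal entries for all
`(u,v) ∈ U × U`, where `ξᵢ = ∂ₓ∂_y log φᵢ` for regularly non-separable `φᵢ`,
all but at most one of which are a.e. non-Gaussian, then every `B(u)` is monomial. -/
theorem contrast_diagonalization_monomial {d : ℕ}
    (U : Set (Fin d → ℝ)) (hU : IsOpen U)
    (φ : Fin d → ℝ × ℝ → ℝ)
    (hφpos : ∀ i, ∀ p ∈ ((fun y => y i) '' U) ×ˢ ((fun y => y i) '' U), 0 < φ i p)
    (hφC2 : ∀ i, ContDiffOn ℝ 2 (φ i) (((fun y => y i) '' U) ×ˢ ((fun y => y i) '' U)))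
    (hφreg : ∀ i, RegularlyNonSeparableOn (φ i) ((fun y => y i) '' U))
    (hφgauss : ∀ i j, i ≠ j →
      AENonGaussianOn (φ i) (((fun y => y i) '' U) ×ˢ ((fun y => y i) '' U)) ∨
      AENonGaussianOn (φ j) (((fun y => y j) '' U) ×ˢ ((fun y => y j) '' U)))
    (B : (Fin d → ℝ) → Matrix (Fin d) (Fin d) ℝ)
    (hBcont : ContinuousOn B U)
    (hBinv : ∀ u ∈ U, IsUnit (B u).det)
    (hΛ : ∀ u ∈ U, ∀ v ∈ U, ∀ i j, i ≠ j →
      ((B u)ᵀ * Matrix.diagonal (fun k => mld (φ k) (u k, v k)) * B v) i j = 0) :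
    ∀ u ∈ U, IsMonomialMatrix (B u) := by
  classical
  intro u₀ hu₀
  set X : (Fin d → ℝ) → Matrix (Fin d) (Fin d) ℝ := fun u => ((B u)ᵀ)⁻¹ with hXdef
  have hBent : ∀ i j', ContinuousOn (fun u => B u i j') U := by
    intro i j'
    exact ((continuous_apply j').comp (continuous_apply i)).comp_continuousOn hBcont
  have hdetne : ∀ u ∈ U, ((B u)ᵀ).det ≠ 0 := by
    intro u hu
    rw [Matrix.det_transpose]
    exact (hBinv u hu).ne_zero
  have hXcont : ∀ i j', ContinuousOn (fun u => X u i j') U := by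
    intro i j'
    have hXeq : ∀ u, X u i j' = (((B u)ᵀ).det)⁻¹ * ((B u)ᵀ).adjugate i j' := by
      intro u
      show ((B u)ᵀ)⁻¹ i j' = _
      rw [Matrix.inv_def, Matrix.smul_apply, Ring.inverse_eq_inv', smul_eq_mul]
    rw [continuousOn_iff_continuous_restrict]
    have hBrestr : Continuous (fun p : U => B (p : Fin d → ℝ)) :=
      continuousOn_iff_continuous_restrict.1 hBcont
    have hT : Continuous (fun p : U => (B (p : Fin d → ℝ))ᵀ) := hBrestr.matrix_transpose
    have hdet : Continuous (fun p : U => ((B (p : Fin d → ℝ))ᵀ).det) := hT.matrix_det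
    have hadj : Continuous (fun p : U => ((B (p : Fin d → ℝ))ᵀ).adjugate i j') :=
      (continuous_apply j').comp ((continuous_apply i).comp hT.matrix_adjugate)
    have hres : (U.restrict fun u => X u i j') =
        fun p : U => (((B (p : Fin d → ℝ))ᵀ).det)⁻¹ * ((B (p : Fin d → ℝ))ᵀ).adjugate i j' :=
      funext fun p => hXeq p
    exact ((hdet.inv₀ (fun p => hdetne p p.2)).mul hadj).congr (fun p => (hXeq p).symm)
  have star : ∀ u ∈ U, ∀ v ∈ U, ∀ k j', mld (φ k) (u k, v k) * B v k j' =
      X u k j' * (((B u)ᵀ * Matrix.diagonal (fun n => mld (φ n) (u n, v n)) * B v) j' j') := by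
    intro u hu v hv k j'
    have hunit : IsUnit ((B u)ᵀ).det := by
      rw [Matrix.det_transpose]; exact hBinv u hu
    have hXM : X u * ((B u)ᵀ * Matrix.diagonal (fun n => mld (φ n) (u n, v n)) * B v) =
        Matrix.diagonal (fun n => mld (φ n) (u n, v n)) * B v := by
      rw [Matrix.mul_assoc ((B u)ᵀ) _ (B v),
        ← Matrix.mul_assoc (X u) ((B u)ᵀ) _]
      show ((B u)ᵀ)⁻¹ * (B u)ᵀ * _ = _
      rw [Matrix.nonsing_inv_mul _ hunit, Matrix.one_mul]
    have hentry : (X u * ((B u)ᵀ * Matrix.diagonal (fun n => mld (φ n) (u n, v n)) * B v)) k j' =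
        X u k j' * (((B u)ᵀ * Matrix.diagonal (fun n => mld (φ n) (u n, v n)) * B v) j' j') := by
      rw [Matrix.mul_apply]
      apply Finset.sum_eq_single j'
      · intro i _ hi
        rw [hΛ u hu v hv i j' hi, mul_zero]
      · intro h
        exact absurd (Finset.mem_univ j') h
    have hdg : (Matrix.diagonal (fun n => mld (φ n) (u n, v n)) * B v) k j' =
        mld (φ k) (u k, v k) * B v k j' := Matrix.diagonal_mul _ _ _ _
    rw [← hdg, ← hXM, hentry]
  apply isMonomial_of_cols (hBinv u₀ hu₀)
  intro j k l hkl hMk hMl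
  set V : Set (Fin d → ℝ) :=
    (U ∩ (fun u => B u k j) ⁻¹' {(0 : ℝ)}ᶜ) ∩ (fun u => B u l j) ⁻¹' {(0 : ℝ)}ᶜ with hV
  have hV1open : IsOpen (U ∩ (fun u => B u k j) ⁻¹' {(0 : ℝ)}ᶜ) :=
    (hBent k j).isOpen_inter_preimage hU isOpen_compl_singleton
  have hVopen : IsOpen V :=
    ((hBent l j).mono (fun u hu => hu.1)).isOpen_inter_preimage hV1open isOpen_compl_singleton
  have hVU : V ⊆ U := fun u hu => hu.1.1
  have hu₀V : u₀ ∈ V := ⟨⟨hu₀, hMk⟩, hMl⟩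
  have hBk : ∀ u ∈ V, B u k j ≠ 0 := fun u hu => hu.1.2
  have hBl : ∀ u ∈ V, B u l j ≠ 0 := fun u hu => hu.2
  by_cases hcl : ∀ u ∈ V, X u l j = 0
  · obtain ⟨a, b, hab, hsub, hzero⟩ := slice_zero star hVopen hVU hBl hcl hu₀V
    have hrect : Ioo a b ×ˢ Ioo a b ⊆ ((fun y => y l) '' U) ×ˢ ((fun y => y l) '' U) :=
      Set.prod_mono hsub hsub
    have hsep : SeparableOn (φ l) (Ioo a b ×ˢ Ioo a b) :=
      rect_sep (φ l) hab hab (fun p hp => hφpos l p (hrect hp)) ((hφC2 l).mono hrect) hzero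
    exact (sep_contra ((hφreg l).2.2.1) hrect (isOpen_Ioo.prod isOpen_Ioo)
      ⟨((a + b) / 2, (a + b) / 2),
        ⟨⟨by linarith, by linarith⟩, ⟨by linarith, by linarith⟩⟩⟩ hsep).elim
  by_cases hck : ∀ u ∈ V, X u k j = 0
  · obtain ⟨a, b, hab, hsub, hzero⟩ := slice_zero star hVopen hVU hBk hck hu₀V
    have hrect : Ioo a b ×ˢ Ioo a b ⊆ ((fun y => y k) '' U) ×ˢ ((fun y => y k) '' U) :=
      Set.prod_mono hsub hsub
    have hsep : SeparableOn (φ k) (Ioo a b ×ˢ Ioo a b) :=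
      rect_sep (φ k) hab hab (fun p hp => hφpos k p (hrect hp)) ((hφC2 k).mono hrect) hzero
    exact (sep_contra ((hφreg k).2.2.1) hrect (isOpen_Ioo.prod isOpen_Ioo)
      ⟨((a + b) / 2, (a + b) / 2),
        ⟨⟨by linarith, by linarith⟩, ⟨by linarith, by linarith⟩⟩⟩ hsep).elim
  push_neg at hcl hck
  obtain ⟨u₂, hu₂V, hX2⟩ := hcl
  obtain ⟨u₁, hu₁V, hX1⟩ := hck
  obtain ⟨a, b, c, e, hab, hce, hsub1, hsub2, α, β, hαc, hβc, heqk⟩ :=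
    slice_fact star hXcont hBent hVopen hVU hkl hBk hBl hu₂V hX2 hu₀V
  obtain ⟨a', b', c', e', hab', hce', hsub1', hsub2', α', β', hαc', hβc', heql⟩ :=
    slice_fact star hXcont hBent hVopen hVU (Ne.symm hkl) hBl hBk hu₁V hX1 hu₀V
  have hrectk : Ioo a b ×ˢ Ioo c e ⊆ ((fun y => y k) '' U) ×ˢ ((fun y => y k) '' U) :=
    Set.prod_mono hsub1 hsub2
  have hrectl : Ioo a' b' ×ˢ Ioo c' e' ⊆ ((fun y => y l) '' U) ×ˢ ((fun y => y l) '' U) :=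
    Set.prod_mono hsub1' hsub2'
  have Pk := rect_pg (φ k) hab hce (fun p hp => hφpos k p (hrectk hp))
    ((hφC2 k).mono hrectk) α β hαc hβc heqk
  have Pl := rect_pg (φ l) hab' hce' (fun p hp => hφpos l p (hrectl hp))
    ((hφC2 l).mono hrectl) α' β' hαc' hβc' heql
  rcases Pk with ⟨O, hOsub, hOopen, hOne, hOsep⟩ | ⟨Ok, hOsubk, hOopenk, hOnek, hOpgk⟩
  · exact sep_contra ((hφreg k).2.2.1) (hOsub.trans hrectk) hOopen hOne hOsep
  rcases Pl with ⟨O, hOsub, hOopen, hOne, hOsep⟩ | ⟨Ol, hOsubl, hOopenl, hOnel, hOpgl⟩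
  · exact sep_contra ((hφreg l).2.2.1) (hOsub.trans hrectl) hOopen hOne hOsep
  rcases hφgauss k l hkl with hg | hg
  · exact gauss_contra hg (hOsubk.trans hrectk) hOopenk hOnek hOpgk
  · exact gauss_contra hg (hOsubl.trans hrectl) hOopenl hOnel hOpgl
end
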